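/- For every r ≥ 0, setting u = √(4+2r+r²), u₊ = 6+r+u, u₋ = 6+r−u, the numbers 0, −4, −u₊, −u₋ are exactly the eigenvalues of the matrix Q = [[-(6+2r), 3+r, 0, 3+r],[1,-4,3,0],[0,1,-2,1],[1,0,3,-4]]; equivalently, the characteristic polynomial of Q is λ(λ+4)(λ+u₊)(λ+u₋). -/

import Mathlib

open Matrix Polynomial

/-- Rate matrix of the dinucleotide encoding {C,C̄}×{G,Ḡ} in the JC+CpG model. -/
def Qmat (r : ℝ) : Matrix (Fin 4) (Fin 4) ℝ :=
  !![-(6+2*r), 3+r, 0, 3+r;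
     1, -4, 3, 0;
     0, 1, -2, 1;
     1, 0, 3, -4]

/-- The characteristic polynomial of Q factors as λ(λ+4)(λ+u₊)(λ+u₋), so that
0, −4, −u₊, −u₋ are exactly the eigenvalues of Q. -/
theorem stmt4 (r : ℝ) (hr : 0 ≤ r) :
    (Qmat r).charpoly =
      X * (X + C 4) * (X + C (6 + r + Real.sqrt (4 + 2*r + r^2)))
        * (X + C (6 + r - Real.sqrt (4 + 2*r + r^2))) := by
  have hs : Real.sqrt (4 + 2*r + r^2) * Real.sqrt (4 + 2*r + r^2) = 4 + 2*r + r^2 :=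
    Real.mul_self_sqrt (by positivity)
  have hcm : (Qmat r).charmatrix =
      !![X + C (6+2*r), -C (3+r), 0, -C (3+r);
         -1, X + C 4, -C 3, 0;
         0, -1, X + C 2, -1;
         -1, 0, -C 3, X + C 4] := by
    ext i j
    fin_cases i <;> fin_cases j <;>
      simp [Matrix.charmatrix_apply, Qmat, Matrix.one_apply] <;> ring
  have hC : (C (Real.sqrt (4+2*r+r^2)) : ℝ[X]) * C (Real.sqrt (4+2*r+r^2))
      = 4 + 2 * C r + C r ^ 2 := by
    rw [← C_mul, hs]; simp only [map_add, _root_.map_mul, map_pow, map_ofNat]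
  rw [Matrix.charpoly, hcm]
  simp [Matrix.det_succ_row_zero, Fin.sum_univ_succ, Fin.succAbove, Fin.castSucc,
    Fin.castAdd, Fin.castLE]
  simp only [map_ofNat]
  linear_combination (X * (X + (4:ℝ[X]))) * hC
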